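/- Consider the line graph on vertices {0,...,n-1} with edges (i,i) and (i,i+1) for each i, and let W be its lazy random-walk matrix (each non-terminal vertex stays or moves right with probability 1/2). Starting from vertex n-i-1, the probability of not being at the terminal vertex n-1 after t steps equals ∑_{j<i} C(t,j) 2^{-t}. -/

import Mathlib

set_option maxHeartbeats 1000000


open Matrix Finset

lemma pascal_sum (t k : ℕ) :
    ∑ j ∈ Finset.range (k+1), Nat.choose (t+1) j
      = ∑ j ∈ Finset.range (k+1), t.choose j + ∑ j ∈ Finset.range k, t.choose j := by
  rw [Finset.sum_range_succ' (fun j => Nat.choose (t+1) j) k,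
      Finset.sum_range_succ' (fun j => Nat.choose t j) k]
  simp only [Nat.choose_succ_succ, Finset.sum_add_distrib, Nat.choose_zero_right]
  ring

/-- For the lazy absorbing random walk on the line graph on `n` vertices,
starting from vertex `n - i - 1`, the probability of not being at the terminal
vertex `n-1` after `t` steps equals `∑_{j<i} C(t,j) 2^{-t}`. -/
theorem stmt1 (n : ℕ) (hn : 0 < n) (t i : ℕ) (hi : i < n)
    (W : Matrix (Fin n) (Fin n) ℝ)
    (hW : ∀ a b : Fin n, W a b =
      if (b : ℕ) = n - 1 then (if a = b then (1 : ℝ) else 0)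
      else if a = b ∨ (a : ℕ) = (b : ℕ) + 1 then 1 / 2 else 0) :
    1 - (W ^ t) ⟨n - 1, by omega⟩ ⟨n - i - 1, by omega⟩
      = ∑ j ∈ Finset.range i, (t.choose j : ℝ) / 2 ^ t := by
  induction t generalizing i with
  | zero =>
    rw [pow_zero, Matrix.one_apply]
    rcases Nat.eq_zero_or_pos i with h | h
    · subst h; simp
    · rw [if_neg (by simp [Fin.ext_iff]; omega)]
      have : ∑ j ∈ Finset.range i, ((Nat.choose 0 j : ℝ)) / 2 ^ 0
          = ∑ j ∈ Finset.range i, if j = 0 then (1:ℝ) else 0 := by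
        apply Finset.sum_congr rfl
        intro j _
        by_cases hj : j = 0
        · simp [hj]
        · rw [Nat.choose_eq_zero_of_lt (by omega)]; simp [hj]
      rw [this, Finset.sum_ite_eq' (Finset.range i) 0 (fun _ => (1:ℝ))]
      simp [Finset.mem_range, h]
  | succ t IH =>
    rw [pow_succ, Matrix.mul_apply]
    rcases Nat.eq_zero_or_pos i with h | h
    · subst h
      have hv : ∀ b : Fin n, W b ⟨n - 0 - 1, by omega⟩ =
          if b = ⟨n - 0 - 1, by omega⟩ then (1:ℝ) else 0 := by
        intro b; rw [hW]; simp
      simp only [hv, mul_ite, mul_one, mul_zero]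
      rw [Finset.sum_ite_eq' Finset.univ _ (fun b => (W ^ t) ⟨n-1, by omega⟩ b)]
      simp only [Finset.mem_univ, if_true]
      simpa using IH 0 (by omega)
    · obtain ⟨k, rfl⟩ : ∃ k, i = k + 1 := ⟨i - 1, by omega⟩
      set c : Fin n := ⟨n - (k+1) - 1, by omega⟩ with hc
      set c' : Fin n := ⟨n - k - 1, by omega⟩ with hc'
      have hcc' : c ≠ c' := by simp [hc, hc', Fin.ext_iff]; omega
      have hWb : ∀ b : Fin n, W b c =
          if b = c ∨ b = c' then (1:ℝ)/2 else 0 := by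
        intro b
        rw [hW, if_neg (by simp [hc]; omega)]
        have hiff : (b = c ∨ (b:ℕ) = (c:ℕ)+1) ↔ (b = c ∨ b = c') := by
          simp only [hc, hc', Fin.ext_iff]
          omega
        rw [if_congr hiff rfl rfl]
      simp only [hWb, mul_ite, mul_zero]
      have split : ∀ b : Fin n,
          (if b = c ∨ b = c' then (W ^ t) ⟨n-1, by omega⟩ b * (1/2) else 0)
          = (if b = c then (W ^ t) ⟨n-1, by omega⟩ b * (1/2) else 0)
            + (if b = c' then (W ^ t) ⟨n-1, by omega⟩ b * (1/2) else 0) := by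
        intro b
        by_cases h1 : b = c <;> by_cases h2 : b = c' <;>
          simp_all
      simp only [split]
      rw [Finset.sum_add_distrib]
      simp only [Finset.sum_ite_eq', Finset.mem_univ, if_true]
      have h1 := IH (k+1) hi
      have h2 := IH k (by omega)
      have key : (∑ j ∈ Finset.range (k+1), ((Nat.choose (t+1) j : ℝ)))
          = ∑ j ∈ Finset.range (k+1), (t.choose j : ℝ)
            + ∑ j ∈ Finset.range k, (t.choose j : ℝ) := by
        exact_mod_cast pascal_sum t k
      have hp : (2:ℝ)^t ≠ 0 := by positivity
      have key2 : ∑ j ∈ Finset.range (k+1), ((Nat.choose (t+1) j : ℝ))/2^(t+1)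
          = (∑ j ∈ Finset.range (k+1), (t.choose j : ℝ)/2^t
            + ∑ j ∈ Finset.range k, (t.choose j : ℝ)/2^t)/2 := by
        rw [← Finset.sum_div, ← Finset.sum_div, ← Finset.sum_div, key]
        rw [pow_succ]
        field_simp
      linear_combination h1/2 + h2/2 - key2
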